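/- arXiv:2202.06230 — 2 statements merged into one kernel-verified Lean document; each statement's English description precedes it below -/
import Mathlib

section
/- Let k ≥ 2 be an integer and let a, d, r, m be positive integers with 2r+1 = a·d, a odd, a ≥ 5, a not dividing m, d ≤ 2k−1, and m < 4kr. Suppose that ⌊2m/a⌋ ≥ ⌈d·m/(r+1)⌉ and ⌊(a−2)m/a⌋ ≥ ⌈(r−d)·m/r⌉. Then r ≤ 8k². -/
theorem stmt_6 (k a d r m : ℕ) (hk : 2 ≤ k) (ha : 0 < a) (hd : 0 < d)
    (hr : 0 < r) (hm : 0 < m) (hrel : 2 * r + 1 = a * d) (hodd : Odd a)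
    (ha5 : 5 ≤ a) (hnd : ¬ a ∣ m) (hdk : d ≤ 2 * k - 1) (hmr : m < 4 * k * r)
    (h1 : ⌊(2 * (m : ℚ)) / a⌋ ≥ ⌈((d : ℚ) * m) / (r + 1)⌉)
    (h2 : ⌊(((a : ℚ) - 2) * m) / a⌋ ≥ ⌈(((r : ℚ) - d) * m) / r⌉) :
    r ≤ 8 * k ^ 2 := by
  by_contra hcon
  push_neg at hcon
  have ha0 : (a : ℚ) ≠ 0 := by positivity
  have hr0 : (r : ℚ) ≠ 0 := by positivity
  have hr1 : (r : ℚ) + 1 ≠ 0 := by positivity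
  set q : ℚ := 2 * (m : ℚ) / a with hq
  -- q is not an integer
  have hnint : (⌊q⌋ : ℚ) ≠ q := by
    intro h
    have h2m : (2 * m : ℤ) = ⌊q⌋ * a := by
      have : (⌊q⌋ : ℚ) * a = 2 * m := by
        rw [h, hq]; field_simp
      exact_mod_cast this.symm
    have hdvd : (a : ℤ) ∣ 2 * m := ⟨⌊q⌋, by linarith [h2m]⟩
    have hdvd' : a ∣ 2 * m := by exact_mod_cast hdvd
    have hcop : Nat.Coprime a 2 := Nat.coprime_two_right.mpr hodd
    exact hnd ((Nat.Coprime.dvd_of_dvd_mul_left hcop) hdvd')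
  have hceil : ⌈q⌉ = ⌊q⌋ + 1 := by
    have hfl : (⌊q⌋ : ℚ) < q := lt_of_le_of_ne (Int.floor_le q) hnint
    have h1 := Int.ceil_le_floor_add_one q
    have h2 : (⌊q⌋ : ℚ) < (⌈q⌉ : ℚ) := lt_of_lt_of_le hfl (Int.le_ceil q)
    have h3 : ⌊q⌋ < ⌈q⌉ := by exact_mod_cast h2
    omega
  have hfloor2 : ⌊(((a : ℚ) - 2) * m) / a⌋ = m - ⌊q⌋ - 1 := by
    have heq : (((a : ℚ) - 2) * m) / a = ((m : ℤ) : ℚ) + (-q) := by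
      rw [hq]; push_cast; field_simp; ring
    rw [heq, Int.floor_intCast_add, Int.floor_neg, hceil]
    push_cast
    ring
  -- chain of inequalities
  have f1 : (⌊q⌋ : ℚ) ≥ ((d : ℚ) * m) / (r + 1) := by
    refine le_trans (Int.le_ceil _) ?_
    exact_mod_cast h1
  have f2 : ((⌊(((a : ℚ) - 2) * m) / a⌋ : ℤ) : ℚ) ≥ (((r : ℚ) - d) * m) / r := by
    refine le_trans (Int.le_ceil _) ?_
    exact_mod_cast h2
  have fsum : ((m : ℚ) - 1) ≥ ((d : ℚ) * m) / (r + 1) + (((r : ℚ) - d) * m) / r := by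
    have hx : ((⌊(((a : ℚ) - 2) * m) / a⌋ : ℤ) : ℚ) = (m : ℚ) - (⌊q⌋ : ℚ) - 1 := by
      rw [hfloor2]; push_cast; ring
    rw [hx] at f2
    linarith
  -- numeric bound: d*m < r*(r+1)
  obtain ⟨j, hj⟩ : ∃ j, 2 * k - 1 = j ∧ j + 1 = 2 * k := ⟨2 * k - 1, rfl, by omega⟩
  have hd2 : d * m < r * (r + 1) := by
    have h1 : d * m ≤ (2 * k - 1) * m := Nat.mul_le_mul_right m hdk
    obtain ⟨hj1, hj2⟩ := hj
    rw [hj1] at h1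
    have h2 : j * m < j * (4 * k * r) := by
      have hj0 : 0 < j := by omega
      exact Nat.mul_lt_mul_of_le_of_lt (le_refl j) hmr hj0
    have h3 : j * (4 * k * r) ≤ r * (r + 1) := by nlinarith
    omega
  -- final contradiction
  have e : ((d : ℚ) * m) / (r + 1) + (((r : ℚ) - d) * m) / r
      = (m : ℚ) - ((d : ℚ) * m) / ((r : ℚ) * (r + 1)) := by
    field_simp
    ring
  have hlt : ((d : ℚ) * m) / ((r : ℚ) * (r + 1)) < 1 := by
    rw [div_lt_one (by positivity)]
    exact_mod_cast hd2
  rw [e] at fsum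
  linarith
end

section
/- Let k ≥ 2 be an integer and let a, d, r, m be positive integers with r+2 = a·(2d+1), a ≥ 5, a not dividing m, 2d+1 ≤ k−1, and m < 4kr. Suppose that ⌊m/a⌋ ≥ ⌈(2d+1)·m/(r+4)⌉ and ⌊(a−1)m/a⌋ ≥ ⌈(r−2d−1)·m/r⌉. Then r ≤ 16k² − 4. -/
theorem stmt_7 (k a d r m : ℕ) (hk : 2 ≤ k) (ha : 0 < a) (hd : 0 < d)
    (hr : 0 < r) (hm : 0 < m) (hrel : r + 2 = a * (2 * d + 1))
    (ha5 : 5 ≤ a) (hnd : ¬ a ∣ m) (hdk : 2 * d + 1 ≤ k - 1) (hmr : m < 4 * k * r)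
    (h1 : ⌊(m : ℚ) / a⌋ ≥ ⌈((2 * (d : ℚ) + 1) * m) / (r + 4)⌉)
    (h2 : ⌊(((a : ℚ) - 1) * m) / a⌋ ≥ ⌈(((r : ℚ) - 2 * d - 1) * m) / r⌉) :
    r ≤ 16 * k ^ 2 - 4 := by
  by_contra hcon
  push_neg at hcon
  obtain ⟨K, hK⟩ : ∃ K, K = k ^ 2 := ⟨_, rfl⟩
  rw [← hK] at hcon
  have hK4 : 4 ≤ K := by rw [hK]; nlinarith
  have hr16 : 16 * K ≤ r + 3 := by omega
  have hdk' : 2 * d + 1 ≤ k := by omega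
  -- casts
  have haQ : (0:ℚ) < a := by exact_mod_cast ha
  have hrQ : (0:ℚ) < r := by exact_mod_cast hr
  have hmQ : (0:ℚ) < m := by exact_mod_cast hm
  have hr4Q : (0:ℚ) < (r:ℚ) + 4 := by linarith
  have hmrQ : (m:ℚ) < 4 * k * r := by exact_mod_cast hmr
  have hdkQ : 2 * (d:ℚ) + 1 ≤ k := by exact_mod_cast hdk'
  have hr16Q : 16 * ((k:ℚ)) ^ 2 ≤ (r:ℚ) + 3 := by
    have : (16 * K : ℕ) ≤ (r + 3 : ℕ) := hr16
    have h' : (16 * K : ℚ) ≤ (r:ℚ) + 3 := by exact_mod_cast this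
    rw [hK] at h'; push_cast at h'; linarith
  have hkQ : (2:ℚ) ≤ k := by exact_mod_cast hk
  set x : ℚ := ((2 * (d : ℚ) + 1) * m) / (r + 4) with hx
  set y : ℚ := (((r : ℚ) - 2 * d - 1) * m) / r with hy
  -- exact sum identity
  have hsum : x + y = (m:ℚ) - 4 * (2 * (d:ℚ) + 1) * m / (r * (r + 4)) := by
    rw [hx, hy]
    field_simp
    ring
  -- epsilon < 1
  have hkey : 4 * (2 * (d:ℚ) + 1) * m < r * (r + 4) := by
    nlinarith [mul_le_mul_of_nonneg_right hdkQ (le_of_lt hmQ),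
      mul_lt_mul_of_pos_left hmrQ (by linarith : (0:ℚ) < 4 * k),
      mul_le_mul_of_nonneg_right hr16Q (le_of_lt hrQ)]
  have hepslt : 4 * (2 * (d:ℚ) + 1) * m / (r * (r + 4)) < 1 := by
    rw [div_lt_one (by positivity)]; exact hkey
  have hepspos : 0 < 4 * (2 * (d:ℚ) + 1) * m / (r * (r + 4)) := by positivity
  -- ceilings sum ≥ m
  have hceil : (m:ℤ) ≤ ⌈x⌉ + ⌈y⌉ := by
    have h1' : (m:ℤ) ≤ ⌈x + y⌉ := by
      have : ((m:ℤ) - 1 : ℤ) < ⌈x + y⌉ := by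
        rw [Int.lt_ceil]
        push_cast
        rw [hsum]
        linarith
      omega
    exact le_trans h1' (Int.ceil_add_le x y)
  -- floors sum ≤ m - 1
  have hf1 : (⌊(m:ℚ)/a⌋ : ℚ) < (m:ℚ)/a := by
    refine lt_of_le_of_ne (Int.floor_le _) ?_
    intro h
    apply hnd
    have hfl0 : 0 ≤ ⌊(m:ℚ)/a⌋ := Int.floor_nonneg.mpr (by positivity)
    obtain ⟨n, hn⟩ := Int.eq_ofNat_of_zero_le hfl0
    refine ⟨n, ?_⟩
    have : (m:ℚ) = a * n := by
      rw [eq_div_iff (ne_of_gt haQ)] at h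
      rw [hn] at h
      push_cast at h ⊢
      linarith
    exact_mod_cast this
  have hf2 : (⌊((a:ℚ) - 1) * m / a⌋ : ℚ) ≤ ((a:ℚ) - 1) * m / a := Int.floor_le _
  have hfsum : ((m:ℚ))/a + ((a:ℚ) - 1) * m / a = m := by field_simp; ring
  have hfloor : (⌊(m:ℚ)/a⌋ + ⌊((a:ℚ) - 1) * m / a⌋ : ℤ) < (m:ℤ) := by
    have : ((⌊(m:ℚ)/a⌋ + ⌊((a:ℚ) - 1) * m / a⌋ : ℤ) : ℚ) < (m:ℚ) := by
      push_cast
      linarith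
    exact_mod_cast this
  have := le_trans hceil (add_le_add h1 h2)
  omega
end
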